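/- Let w ∈ ℂ with w ∉ Λ. Then t ↦ σ_w(t, τ) is holomorphic on ℂ ∖ Λ, and at each lattice point λ = lτ + m (l, m ∈ ℤ) it has a simple pole with residue e^{2πi w l}; that is, the limit of (t − λ)·σ_w(t, τ) as t → λ exists and equals e^{2πi w l}. In particular the residue of σ_w(t,τ) at t = 0 equals 1. -/

import Mathlib

open Complex Filter
open scoped Topology

noncomputable section

/-- The lattice `Λ = ℤτ + ℤ ⊂ ℂ` as a set. -/
def Lam (τ : ℂ) : Set ℂ := {c | ∃ l m : ℤ, c = l * τ + m}

/-- The infinite product `(y;q) = ∏_{j=0}^∞ (1 - y qʲ)`. -/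
def qPoch (y q : ℂ) : ℂ := ∏' j : ℕ, (1 - y * q ^ j)

/-- The first Jacobi theta function
`θ(z,τ) = i e^{πi(τ/4 - z)} (x;q)(q/x;q)(q;q)`, `q = e^{2πiτ}`, `x = e^{2πiz}`. -/
def theta (z τ : ℂ) : ℂ :=
  Complex.I * Complex.exp ((Real.pi : ℂ) * Complex.I * (τ / 4 - z)) *
    qPoch (Complex.exp (2 * (Real.pi : ℂ) * Complex.I * z))
      (Complex.exp (2 * (Real.pi : ℂ) * Complex.I * τ)) *
    qPoch (Complex.exp (2 * (Real.pi : ℂ) * Complex.I * τ) /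
        Complex.exp (2 * (Real.pi : ℂ) * Complex.I * z))
      (Complex.exp (2 * (Real.pi : ℂ) * Complex.I * τ)) *
    qPoch (Complex.exp (2 * (Real.pi : ℂ) * Complex.I * τ))
      (Complex.exp (2 * (Real.pi : ℂ) * Complex.I * τ))

/-- `θ'(z,τ)`, the derivative of `θ` in the `z` variable. -/
def thetaD (z τ : ℂ) : ℂ := deriv (fun u => theta u τ) z

/-- `σ_w(t,τ) = θ(w-t,τ)θ'(0,τ)/(θ(w,τ)θ(t,τ))`. -/
def sigmaW (w t τ : ℂ) : ℂ := theta (w - t) τ * thetaD 0 τ / (theta w τ * theta t τ)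


section ThetaAuxSection
open Finset
namespace ThetaAux
variable {q y τ : ℂ}

lemma hasProd_zero_of_eq_zero {f : ℕ → ℂ} {j : ℕ} (h : f j = 0) : HasProd f 0 := by
  rw [HasProd]
  refine tendsto_const_nhds.congr' ?_
  filter_upwards [Filter.eventually_ge_atTop ({j} : Finset ℕ)] with s hs
  exact (Finset.prod_eq_zero (hs (Finset.mem_singleton_self j)) h).symm

lemma tprod_eq_zero_of {f : ℕ → ℂ} {j : ℕ} (h : f j = 0) : ∏' i, f i = 0 :=
  (hasProd_zero_of_eq_zero h).tprod_eq

variable {q y : ℂ}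

lemma summable_log (hq : ‖q‖ < 1) (y : ℂ) :
    Summable fun j : ℕ => Complex.log (1 - y * q ^ j) := by
  have hgeo : Summable fun j : ℕ => (3/2) * (‖y‖ * ‖q‖ ^ j) :=
    ((summable_geometric_of_lt_one (norm_nonneg q) hq).mul_left _).mul_left _
  refine hgeo.of_norm_bounded_eventually_nat ?_
  have htend : Tendsto (fun j : ℕ => ‖y‖ * ‖q‖ ^ j) atTop (𝓝 0) := by
    simpa using (tendsto_pow_atTop_nhds_zero_of_lt_one (norm_nonneg q) hq).const_mul ‖y‖
  filter_upwards [htend.eventually_le_const (by norm_num : (0:ℝ) < 1/2)] with j hj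
  have hb : ‖-(y * q ^ j)‖ ≤ 1/2 := by
    simpa [norm_mul, norm_pow] using hj
  calc ‖Complex.log (1 - y * q ^ j)‖ = ‖Complex.log (1 + -(y * q ^ j))‖ := by ring_nf
    _ ≤ (3/2) * ‖-(y * q ^ j)‖ := Complex.norm_log_one_add_half_le_self hb
    _ = (3/2) * (‖y‖ * ‖q‖ ^ j) := by simp [norm_mul, norm_pow]

lemma multipliable_aux (hq : ‖q‖ < 1) (y : ℂ) :
    Multipliable fun j : ℕ => 1 - y * q ^ j := by
  by_cases h0 : ∃ j, 1 - y * q ^ j = 0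
  · obtain ⟨j, hj⟩ := h0
    exact ⟨0, hasProd_zero_of_eq_zero hj⟩
  · push_neg at h0
    exact Complex.multipliable_of_summable_log (summable_log hq y)

lemma qPoch_shift (hq : ‖q‖ < 1) (y : ℂ) (k : ℕ) :
    qPoch y q = (∏ j ∈ Finset.range k, (1 - y * q ^ j)) * qPoch (y * q ^ k) q := by
  have h : Multipliable fun n : ℕ => 1 - y * q ^ (n + k) := by
    refine (multipliable_aux hq (y * q ^ k)).congr fun n => ?_
    rw [pow_add]; ring
  have := Multipliable.prod_mul_tprod_nat_mul' (f := fun j : ℕ => 1 - y * q ^ j) (k := k) h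
  rw [qPoch, ← this, qPoch]
  congr 1
  refine tprod_congr fun n => ?_
  simp only [pow_add]; ring

lemma qPoch_step (hq : ‖q‖ < 1) (y : ℂ) :
    qPoch y q = (1 - y) * qPoch (y * q) q := by
  simpa using qPoch_shift hq y 1

lemma qPoch_eq_exp (hq : ‖q‖ < 1) (hy : ∀ j : ℕ, 1 - y * q ^ j ≠ 0) :
    qPoch y q = Complex.exp (∑' j : ℕ, Complex.log (1 - y * q ^ j)) := by
  have := Complex.cexp_tsum_eq_tprod (f := fun j => 1 - y * q ^ j)
    (fun j => hy j) (summable_log hq y)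
  exact this.symm

lemma qPoch_ne_zero (hq : ‖q‖ < 1) (hy : ∀ j : ℕ, 1 - y * q ^ j ≠ 0) :
    qPoch y q ≠ 0 := by
  rw [qPoch_eq_exp hq hy]; exact Complex.exp_ne_zero _

lemma head_diff (q : ℂ) (N : ℕ) :
    Differentiable ℂ fun y : ℂ => ∏ j ∈ Finset.range N, (1 - y * q ^ j) := by
  induction N with
  | zero => simpa using differentiable_const (1:ℂ)
  | succ n ih =>
    simp only [Finset.prod_range_succ]
    exact ih.mul (by fun_prop)

lemma qPoch_differentiable (hq : ‖q‖ < 1) : Differentiable ℂ fun y => qPoch y q := by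
  intro y₀
  set R : ℝ := ‖y₀‖ + 1 with hR
  have hR0 : 0 < R := by positivity
  obtain ⟨N, hN⟩ : ∃ N : ℕ, R * ‖q‖ ^ N ≤ 1/2 := by
    have htend : Tendsto (fun j : ℕ => R * ‖q‖ ^ j) atTop (𝓝 0) := by
      simpa using (tendsto_pow_atTop_nhds_zero_of_lt_one (norm_nonneg q) hq).const_mul R
    exact (htend.eventually_le_const (by norm_num : (0:ℝ) < 1/2)).exists
  -- bound on the ball
  have hbound : ∀ y ∈ Metric.ball (0:ℂ) R, ∀ j : ℕ, ‖y * q ^ N * q ^ j‖ ≤ (1/2) * ‖q‖ ^ j := by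
    intro y hy j
    rw [norm_mul, norm_mul, norm_pow, norm_pow]
    have h1 : ‖y‖ * ‖q‖ ^ N ≤ 1/2 := by
      have hyR : ‖y‖ ≤ R := by
        have := Metric.mem_ball.1 hy; simp only [dist_zero_right] at this; linarith
      calc ‖y‖ * ‖q‖ ^ N ≤ R * ‖q‖ ^ N := by
            exact mul_le_mul_of_nonneg_right hyR (by positivity)
        _ ≤ 1/2 := hN
    exact mul_le_mul_of_nonneg_right h1 (by positivity)
  have hhalf : ∀ y ∈ Metric.ball (0:ℂ) R, ∀ j : ℕ, ‖y * q ^ N * q ^ j‖ ≤ 1/2 := by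
    intro y hy j
    refine (hbound y hy j).trans ?_
    have : ‖q‖ ^ j ≤ 1 := pow_le_one₀ (norm_nonneg q) hq.le
    nlinarith
  have hne : ∀ y ∈ Metric.ball (0:ℂ) R, ∀ j : ℕ, 1 - y * q ^ N * q ^ j ≠ 0 := by
    intro y hy j h
    have := hhalf y hy j
    have h1 : y * q ^ N * q ^ j = 1 := by linear_combination -h
    rw [h1] at this; norm_num at this
  -- differentiability of the log-sum
  have hsum : DifferentiableOn ℂ
      (fun y => ∑' j : ℕ, Complex.log (1 - y * q ^ N * q ^ j)) (Metric.ball (0:ℂ) R) := by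
    refine differentiableOn_tsum_of_summable_norm
      (u := fun j : ℕ => (3/2) * ((1/2) * ‖q‖ ^ j)) ?_ ?_ Metric.isOpen_ball ?_
    · exact ((summable_geometric_of_lt_one (norm_nonneg q) hq).mul_left _).mul_left _
    · intro j
      refine DifferentiableOn.clog ?_ ?_
      · fun_prop
      · intro y hy
        refine Complex.mem_slitPlane_iff.2 (Or.inl ?_)
        have hb := hhalf y hy j
        have : ‖(y * q ^ N * q ^ j).re‖ ≤ 1/2 := by
          refine le_trans ?_ hb
          exact abs_re_le_norm _ |>.trans (le_of_eq rfl)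
        have := abs_le.1 (abs_re_le_norm (y * q ^ N * q ^ j) |>.trans hb : |(y * q ^ N * q ^ j).re| ≤ 1/2) |>.2
        simp only [sub_re, one_re]
        linarith
    · intro j y hy
      have hb : ‖-(y * q ^ N * q ^ j)‖ ≤ 1/2 := by simpa using hhalf y hy j
      calc ‖Complex.log (1 - y * q ^ N * q ^ j)‖
          = ‖Complex.log (1 + -(y * q ^ N * q ^ j))‖ := by ring_nf
        _ ≤ (3/2) * ‖-(y * q ^ N * q ^ j)‖ := Complex.norm_log_one_add_half_le_self hb
        _ ≤ (3/2) * ((1/2) * ‖q‖ ^ j) := by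
            have := hbound y hy j
            simp only [norm_neg] at *
            nlinarith
  -- head
  have hhead : Differentiable ℂ fun y : ℂ => ∏ j ∈ Finset.range N, (1 - y * q ^ j) :=
    head_diff q N
  have hDOn : DifferentiableOn ℂ (fun y => qPoch y q) (Metric.ball (0:ℂ) R) := by
    refine DifferentiableOn.congr
      ((hhead.differentiableOn).mul (hsum.cexp)) ?_
    intro y hy
    rw [qPoch_shift hq y N, qPoch_eq_exp hq (hne y hy)]; rfl
  have hmem : y₀ ∈ Metric.ball (0:ℂ) R := by
    simp only [Metric.mem_ball, dist_zero_right, hR]; linarith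
  exact (hDOn.differentiableAt (Metric.isOpen_ball.mem_nhds hmem))

lemma norm_q_lt_one (hτ : 0 < τ.im) : ‖Complex.exp (2 * (Real.pi : ℂ) * Complex.I * τ)‖ < 1 := by
  rw [Complex.norm_exp]
  rw [Real.exp_lt_one_iff]
  have : (2 * (Real.pi : ℂ) * Complex.I * τ).re = -(2 * Real.pi * τ.im) := by
    simp [Complex.mul_re, Complex.mul_im, Complex.I_re, Complex.I_im]
  rw [this]
  have := Real.pi_pos
  nlinarith

lemma theta_differentiable (hτ : 0 < τ.im) : Differentiable ℂ fun z => theta z τ := by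
  have hq := norm_q_lt_one hτ
  refine ((((differentiable_const _).mul (by fun_prop)).mul ?_).mul ?_).mul (differentiable_const _)
  · exact (qPoch_differentiable hq).comp (by fun_prop)
  · refine (qPoch_differentiable hq).comp ?_
    exact (differentiable_const _).div (by fun_prop) (fun z => Complex.exp_ne_zero _)

lemma exp_two_pi_eq_one_iff {a : ℂ} :
    Complex.exp (2 * (Real.pi : ℂ) * Complex.I * a) = 1 ↔ ∃ n : ℤ, a = n := by
  rw [Complex.exp_eq_one_iff]
  constructor
  · rintro ⟨n, hn⟩
    refine ⟨n, ?_⟩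
    have hne : (2 * (Real.pi : ℂ) * Complex.I) ≠ 0 := by
      simp [Real.pi_ne_zero, Complex.I_ne_zero]
    have : (2 * (Real.pi : ℂ) * Complex.I) * (a - n) = 0 := by linear_combination hn
    rcases mul_eq_zero.1 this with h | h
    · exact absurd h hne
    · exact sub_eq_zero.1 h
  · rintro ⟨n, rfl⟩
    exact ⟨n, by ring⟩


lemma theta_ne_zero (hτ : 0 < τ.im) {z : ℂ} (hz : z ∉ Lam τ) : theta z τ ≠ 0 := by
  have hq := norm_q_lt_one hτ
  set c : ℂ := 2 * (Real.pi : ℂ) * Complex.I with hc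
  have hqe : ∀ j : ℕ, Complex.exp (c * τ) ^ j = Complex.exp (c * (j * τ)) := by
    intro j
    rw [← Complex.exp_nat_mul]; ring_nf
  unfold theta
  refine mul_ne_zero (mul_ne_zero (mul_ne_zero (mul_ne_zero Complex.I_ne_zero
    (Complex.exp_ne_zero _)) ?_) ?_) ?_
  · refine qPoch_ne_zero hq fun j h => ?_
    apply hz
    have h1 : Complex.exp (c * z) * Complex.exp (c * τ) ^ j = 1 := by linear_combination -h
    rw [hqe j, ← Complex.exp_add, ← mul_add] at h1
    obtain ⟨n, hn⟩ := exp_two_pi_eq_one_iff.1 h1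
    exact ⟨-j, n, by push_cast; linear_combination hn⟩
  · refine qPoch_ne_zero hq fun j h => ?_
    apply hz
    have h1 : Complex.exp (c * τ) / Complex.exp (c * z) * Complex.exp (c * τ) ^ j = 1 := by
      linear_combination -h
    rw [← Complex.exp_sub, hqe j, ← Complex.exp_add] at h1
    have h2 : Complex.exp (c * (τ + j * τ - z)) = 1 := by
      rw [← h1]; congr 1; ring
    obtain ⟨n, hn⟩ := exp_two_pi_eq_one_iff.1 h2
    exact ⟨j + 1, -n, by push_cast; linear_combination -hn⟩
  · refine qPoch_ne_zero hq fun j h => ?_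
    have h1 : Complex.exp (c * τ) * Complex.exp (c * τ) ^ j = 1 := by linear_combination -h
    rw [hqe j, ← Complex.exp_add, ← mul_add] at h1
    obtain ⟨n, hn⟩ := exp_two_pi_eq_one_iff.1 h1
    -- τ + j τ = n, take imaginary parts
    have him : ((1 : ℂ) + j) * τ = (n : ℂ) := by push_cast at hn ⊢; linear_combination hn
    have : ((1 + (j:ℝ)) * τ.im) = 0 := by
      have := congrArg Complex.im him
      simpa [Complex.add_im, Complex.mul_im] using this
    have hj : (0:ℝ) ≤ (j:ℝ) := Nat.cast_nonneg j
    nlinarith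

lemma theta_zero : theta 0 τ = 0 := by
  unfold theta qPoch
  have : (∏' j : ℕ, (1 - Complex.exp (2 * (Real.pi : ℂ) * Complex.I * 0) *
      Complex.exp (2 * (Real.pi : ℂ) * Complex.I * τ) ^ j)) = 0 := by
    apply tprod_eq_zero_of (j := 0)
    simp
  rw [this]
  ring

lemma theta_add_one (z : ℂ) : theta (z + 1) τ = - theta z τ := by
  unfold theta
  have e1 : Complex.exp (2 * (Real.pi : ℂ) * Complex.I * (z + 1))
      = Complex.exp (2 * (Real.pi : ℂ) * Complex.I * z) := by
    rw [show 2 * (Real.pi : ℂ) * Complex.I * (z + 1)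
        = 2 * (Real.pi : ℂ) * Complex.I * z + 2 * (Real.pi : ℂ) * Complex.I by ring,
      Complex.exp_add, Complex.exp_two_pi_mul_I, mul_one]
  have e2 : Complex.exp ((Real.pi : ℂ) * Complex.I * (τ / 4 - (z + 1)))
      = - Complex.exp ((Real.pi : ℂ) * Complex.I * (τ / 4 - z)) := by
    rw [show (Real.pi : ℂ) * Complex.I * (τ / 4 - (z + 1))
        = (Real.pi : ℂ) * Complex.I * (τ / 4 - z) + (-((Real.pi : ℂ) * Complex.I)) by ring,
      Complex.exp_add, Complex.exp_neg, Complex.exp_pi_mul_I]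
    field_simp
  rw [e1, e2]
  ring

lemma theta_add_tau (hτ : 0 < τ.im) (z : ℂ) :
    theta (z + τ) τ = - Complex.exp (-((Real.pi : ℂ) * Complex.I * τ)
      - 2 * (Real.pi : ℂ) * Complex.I * z) * theta z τ := by
  have hq := norm_q_lt_one hτ
  set c : ℂ := 2 * (Real.pi : ℂ) * Complex.I with hc
  set x : ℂ := Complex.exp (c * z) with hx
  set q : ℂ := Complex.exp (c * τ) with hqdef
  have hx0 : x ≠ 0 := Complex.exp_ne_zero _
  have e1 : Complex.exp (c * (z + τ)) = x * q := by rw [mul_add, Complex.exp_add]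
  have e2 : Complex.exp ((Real.pi : ℂ) * Complex.I * (τ / 4 - (z + τ)))
      = Complex.exp ((Real.pi : ℂ) * Complex.I * (τ / 4 - z)) *
        Complex.exp (-((Real.pi : ℂ) * Complex.I * τ)) := by
    rw [← Complex.exp_add]; congr 1; ring
  have hq0 : q ≠ 0 := Complex.exp_ne_zero _
  have e3 : q / (x * q) = x⁻¹ := by
    rw [mul_comm x q, ← div_div, div_self hq0, one_div]
  have e4 : x⁻¹ * q = q / x := by field_simp
  have e5 : Complex.exp (-((Real.pi : ℂ) * Complex.I * τ) - c * z)
      = Complex.exp (-((Real.pi : ℂ) * Complex.I * τ)) * x⁻¹ := by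
    rw [hx, ← Complex.exp_neg, ← Complex.exp_add, sub_eq_add_neg]
  unfold theta
  rw [← hc, ← hqdef, ← hx, e1, e2, e3, e5, qPoch_step hq x⁻¹, e4, qPoch_step hq x]
  have hxi : (1 - x⁻¹) = - x⁻¹ * (1 - x) := by field_simp; ring
  rw [hxi]
  ring


lemma neg_one_zpow_ne (dummy : Unit) : (-1:ℂ) ≠ 0 := by norm_num

lemma theta_add_int (m : ℤ) (z : ℂ) : theta (z + m) τ = (-1:ℂ)^m * theta z τ := by
  induction m using Int.induction_on with
  | zero => simp
  | succ n ih =>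
    rw [show z + (((n:ℤ)+1 : ℤ):ℂ) = z + ((n:ℤ):ℂ) + 1 by push_cast; ring,
      theta_add_one, ih, zpow_add₀ (by norm_num : (-1:ℂ) ≠ 0), zpow_one]
    ring
  | pred n ih =>
    rw [show z + ((-(n:ℤ) - 1 : ℤ):ℂ) = z + ((-(n:ℤ) : ℤ):ℂ) - 1 by push_cast; ring]
    have h := theta_add_one (τ := τ) (z + ((-(n:ℤ) : ℤ):ℂ) - 1)
    rw [show z + ((-(n:ℤ) : ℤ):ℂ) - 1 + 1 = z + ((-(n:ℤ) : ℤ):ℂ) by ring] at h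
    have hB : theta (z + ((-(n:ℤ) : ℤ):ℂ) - 1) τ = - theta (z + ((-(n:ℤ) : ℤ):ℂ)) τ := by
      linear_combination h
    rw [hB, ih, show (-(n:ℤ) - 1 : ℤ) = -(n:ℤ) + (-1) by ring,
      zpow_add₀ (by norm_num : (-1:ℂ) ≠ 0), zpow_neg_one]
    ring

lemma theta_add_int_mul (hτ : 0 < τ.im) (l : ℤ) (z : ℂ) :
    theta (z + l*τ) τ = (-1:ℂ)^l *
      Complex.exp (-((Real.pi:ℂ) * Complex.I) * l^2 * τ
        - 2*(Real.pi:ℂ)*Complex.I*l*z) * theta z τ := by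
  induction l using Int.induction_on with
  | zero => simp
  | succ n ih =>
    rw [show z + (((n:ℤ)+1 : ℤ):ℂ)*τ = (z + ((n:ℤ):ℂ)*τ) + τ by push_cast; ring,
      theta_add_tau hτ, ih]
    have he : Complex.exp (-((Real.pi:ℂ) * Complex.I * τ)
          - 2*(Real.pi:ℂ)*Complex.I*(z + ((n:ℤ):ℂ)*τ)) *
        Complex.exp (-((Real.pi:ℂ) * Complex.I) * ((n:ℤ):ℂ)^2 * τ
          - 2*(Real.pi:ℂ)*Complex.I*((n:ℤ):ℂ)*z)
        = Complex.exp (-((Real.pi:ℂ) * Complex.I) * (((n:ℤ)+1:ℤ):ℂ)^2 * τ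
          - 2*(Real.pi:ℂ)*Complex.I*(((n:ℤ)+1:ℤ):ℂ)*z) := by
      rw [← Complex.exp_add]; congr 1; push_cast; ring
    rw [← he, zpow_add₀ (by norm_num : (-1:ℂ) ≠ 0), zpow_one]
    ring
  | pred n ih =>
    have h := theta_add_tau hτ (z + ((-(n:ℤ)-1 : ℤ):ℂ)*τ)
    rw [show (z + ((-(n:ℤ)-1 : ℤ):ℂ)*τ) + τ = z + ((-(n:ℤ) : ℤ):ℂ)*τ by push_cast; ring] at h
    set E : ℂ := -((Real.pi:ℂ) * Complex.I * τ)
      - 2*(Real.pi:ℂ)*Complex.I*(z + ((-(n:ℤ)-1 : ℤ):ℂ)*τ) with hE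
    have hB : theta (z + ((-(n:ℤ)-1 : ℤ):ℂ)*τ) τ
        = - Complex.exp (-E) * theta (z + ((-(n:ℤ) : ℤ):ℂ)*τ) τ := by
      rw [h, ← mul_assoc, neg_mul_neg, ← Complex.exp_add, neg_add_cancel,
        Complex.exp_zero, one_mul]
    rw [hB, ih]
    have he : Complex.exp (-E) *
        Complex.exp (-((Real.pi:ℂ) * Complex.I) * ((-(n:ℤ) : ℤ):ℂ)^2 * τ
          - 2*(Real.pi:ℂ)*Complex.I*((-(n:ℤ) : ℤ):ℂ)*z)
        = Complex.exp (-((Real.pi:ℂ) * Complex.I) * ((-(n:ℤ)-1 : ℤ):ℂ)^2 * τ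
          - 2*(Real.pi:ℂ)*Complex.I*((-(n:ℤ)-1 : ℤ):ℂ)*z) := by
      rw [← Complex.exp_add]; congr 1; rw [hE]; push_cast; ring
    rw [← he, show (-(n:ℤ) - 1 : ℤ) = -(n:ℤ) + (-1) by ring,
      zpow_add₀ (by norm_num : (-1:ℂ) ≠ 0), zpow_neg_one]
    ring
lemma theta_add_lattice (hτ : 0 < τ.im) (l m : ℤ) (z : ℂ) :
    theta (z + (l*τ + m)) τ = (-1:ℂ)^(l+m) *
      Complex.exp (-((Real.pi:ℂ) * Complex.I) * l^2 * τ
        - 2*(Real.pi:ℂ)*Complex.I*l*z) * theta z τ := by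
  rw [show z + ((l:ℂ)*τ + m) = (z + (l:ℂ)*τ) + (m:ℂ) by ring, theta_add_int,
    theta_add_int_mul hτ, zpow_add₀ (by norm_num : (-1:ℂ) ≠ 0)]
  ring

/-- The cofactor `G` with `theta z τ = (1 - e^{2πiz}) * G z`. -/
def Gfun (z τ : ℂ) : ℂ :=
  Complex.I * Complex.exp ((Real.pi : ℂ) * Complex.I * (τ / 4 - z)) *
    qPoch (Complex.exp (2 * (Real.pi : ℂ) * Complex.I * z) *
        Complex.exp (2 * (Real.pi : ℂ) * Complex.I * τ))
      (Complex.exp (2 * (Real.pi : ℂ) * Complex.I * τ)) *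
    qPoch (Complex.exp (2 * (Real.pi : ℂ) * Complex.I * τ) /
        Complex.exp (2 * (Real.pi : ℂ) * Complex.I * z))
      (Complex.exp (2 * (Real.pi : ℂ) * Complex.I * τ)) *
    qPoch (Complex.exp (2 * (Real.pi : ℂ) * Complex.I * τ))
      (Complex.exp (2 * (Real.pi : ℂ) * Complex.I * τ))

lemma theta_eq_G (hτ : 0 < τ.im) (z : ℂ) :
    theta z τ = (1 - Complex.exp (2 * (Real.pi : ℂ) * Complex.I * z)) * Gfun z τ := by
  unfold theta Gfun
  rw [qPoch_step (norm_q_lt_one hτ) (Complex.exp (2 * (Real.pi : ℂ) * Complex.I * z))]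
  ring

lemma G_differentiable (hτ : 0 < τ.im) : Differentiable ℂ fun z => Gfun z τ := by
  have hq := norm_q_lt_one hτ
  unfold Gfun
  refine ((((differentiable_const _).mul (by fun_prop)).mul ?_).mul ?_).mul (differentiable_const _)
  · exact (qPoch_differentiable hq).comp (by fun_prop)
  · refine (qPoch_differentiable hq).comp ?_
    exact (differentiable_const _).div (by fun_prop) (fun z => Complex.exp_ne_zero _)

lemma G_zero_ne (hτ : 0 < τ.im) : Gfun 0 τ ≠ 0 := by
  have hq := norm_q_lt_one hτ
  set q : ℂ := Complex.exp (2 * (Real.pi : ℂ) * Complex.I * τ)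
  have hqfac : ∀ j : ℕ, 1 - q * q ^ j ≠ 0 := by
    intro j h
    have h1 : q * q ^ j = 1 := by linear_combination -h
    have h2 : ‖q * q ^ j‖ < 1 := by
      rw [norm_mul, norm_pow]
      have h3 : ‖q‖ ^ j ≤ 1 := pow_le_one₀ (norm_nonneg q) hq.le
      have h4 : 0 ≤ ‖q‖ := norm_nonneg q
      nlinarith
    rw [h1] at h2; simp at h2
  unfold Gfun
  simp only [mul_zero, Complex.exp_zero, one_mul, sub_zero]
  refine mul_ne_zero (mul_ne_zero (mul_ne_zero (mul_ne_zero Complex.I_ne_zero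
    (Complex.exp_ne_zero _)) ?_) ?_) ?_
  · exact qPoch_ne_zero hq hqfac
  · rw [div_one]; exact qPoch_ne_zero hq hqfac
  · exact qPoch_ne_zero hq hqfac

lemma thetaD_zero_eq (hτ : 0 < τ.im) :
    thetaD 0 τ = -(2 * (Real.pi : ℂ) * Complex.I) * Gfun 0 τ := by
  have h1 : HasDerivAt (fun z : ℂ => 1 - Complex.exp (2 * (Real.pi : ℂ) * Complex.I * z))
      (-(2 * (Real.pi : ℂ) * Complex.I)) 0 := by
    have h0 : HasDerivAt (fun z : ℂ => 2 * (Real.pi : ℂ) * Complex.I * z)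
        (2 * (Real.pi : ℂ) * Complex.I) 0 := by
      simpa using (hasDerivAt_id (0:ℂ)).const_mul (2 * (Real.pi : ℂ) * Complex.I)
    have := h0.cexp
    simp only [mul_zero, Complex.exp_zero, one_mul] at this
    simpa using this.const_sub 1
  have h2 : HasDerivAt (fun z : ℂ => Gfun z τ) (deriv (fun z => Gfun z τ) 0) 0 :=
    ((G_differentiable hτ) 0).hasDerivAt
  have h3 := h1.mul h2
  simp only [mul_zero, Complex.exp_zero, sub_self, zero_mul, add_zero, one_mul] at h3
  have h4 : HasDerivAt (fun z : ℂ => theta z τ)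
      (-(2 * (Real.pi : ℂ) * Complex.I) * Gfun 0 τ) 0 := by
    refine h3.congr_of_eventuallyEq ?_
    filter_upwards with z
    exact (theta_eq_G hτ z)
  rw [thetaD]
  exact h4.deriv

lemma thetaD_zero_ne (hτ : 0 < τ.im) : thetaD 0 τ ≠ 0 := by
  rw [thetaD_zero_eq hτ]
  refine mul_ne_zero ?_ (G_zero_ne hτ)
  simp [Real.pi_ne_zero, Complex.I_ne_zero]

lemma tendsto_slope_theta (hτ : 0 < τ.im) :
    Tendsto (fun u : ℂ => u / theta u τ) (𝓝[≠] (0:ℂ)) (𝓝 (thetaD 0 τ)⁻¹) := by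
  have hd : HasDerivAt (fun u : ℂ => theta u τ) (thetaD 0 τ) 0 :=
    ((theta_differentiable hτ) 0).hasDerivAt
  rw [hasDerivAt_iff_tendsto_slope] at hd
  have hs : Tendsto (fun u : ℂ => theta u τ / u) (𝓝[≠] (0:ℂ)) (𝓝 (thetaD 0 τ)) := by
    refine hd.congr' ?_
    filter_upwards with u
    rw [slope_def_field, theta_zero, sub_zero, sub_zero]
  have := hs.inv₀ (thetaD_zero_ne hτ)
  refine this.congr fun u => ?_
  rw [inv_div]

end ThetaAux
end ThetaAuxSection

open ThetaAux

/-- `t ↦ σ_w(t,τ)` is holomorphic on `ℂ ∖ Λ` and has a simple pole at each lattice point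
`λ = lτ + m` with residue `e^{2πiwl}`; in particular the residue at `t = 0` is `1`. -/
theorem sigma_holomorphic_and_poles (τ : ℂ) (hτ : 0 < τ.im) (w : ℂ) (hw : w ∉ Lam τ) :
    DifferentiableOn ℂ (fun t => sigmaW w t τ) (Lam τ)ᶜ ∧
    (∀ l m : ℤ, Filter.Tendsto (fun t => (t - ((l : ℂ) * τ + m)) * sigmaW w t τ)
      (𝓝[≠] ((l : ℂ) * τ + m)) (𝓝 (Complex.exp (2 * (Real.pi : ℂ) * Complex.I * w * l)))) ∧
    Filter.Tendsto (fun t => t * sigmaW w t τ) (𝓝[≠] (0 : ℂ)) (𝓝 (1 : ℂ)) := by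
  have hθw : theta w τ ≠ 0 := theta_ne_zero hτ hw
  have hD : thetaD 0 τ ≠ 0 := thetaD_zero_ne hτ
  have hdiff := theta_differentiable hτ
  -- Part 1
  have part1 : DifferentiableOn ℂ (fun t => sigmaW w t τ) (Lam τ)ᶜ := by
    unfold sigmaW
    refine DifferentiableOn.div ?_ ?_ ?_
    · exact ((hdiff.comp ((differentiable_const w).sub differentiable_id)).mul
        (differentiable_const _)).differentiableOn
    · exact ((differentiable_const _).mul hdiff).differentiableOn
    · intro t ht
      exact mul_ne_zero hθw (theta_ne_zero hτ ht)
  -- Part 2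
  have part2 : ∀ l m : ℤ, Filter.Tendsto (fun t => (t - ((l : ℂ) * τ + m)) * sigmaW w t τ)
      (𝓝[≠] ((l : ℂ) * τ + m)) (𝓝 (Complex.exp (2 * (Real.pi : ℂ) * Complex.I * w * l))) := by
    intro l m
    set lc : ℂ := (l : ℂ) * τ + m with hlc
    set s : ℂ := (-1:ℂ)^(l+m) with hs
    set e : ℂ := Complex.exp (-((Real.pi:ℂ) * Complex.I) * (l:ℂ)^2 * τ) with he
    set c : ℂ := s * e with hc
    have hs0 : s ≠ 0 := zpow_ne_zero _ (by norm_num)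
    have hc0 : c ≠ 0 := mul_ne_zero hs0 (Complex.exp_ne_zero _)
    -- key identity
    have key : ∀ t : ℂ, theta t τ
        = c * Complex.exp (-(2*(Real.pi:ℂ)*Complex.I*(l:ℂ)) * (t - lc)) * theta (t - lc) τ := by
      intro t
      have h := theta_add_lattice hτ l m (t - lc)
      rw [show (t - lc) + ((l:ℂ)*τ + (m:ℂ)) = t by rw [hlc]; ring] at h
      rw [h, hc, he, hs]
      rw [show -((Real.pi:ℂ) * Complex.I) * (l:ℂ)^2 * τ - 2*(Real.pi:ℂ)*Complex.I*(l:ℂ)*(t - lc)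
          = (-((Real.pi:ℂ) * Complex.I) * (l:ℂ)^2 * τ)
            + (-(2*(Real.pi:ℂ)*Complex.I*(l:ℂ)) * (t - lc)) by ring, Complex.exp_add]
      ring
    -- the model function
    set F : ℂ → ℂ := fun u => (theta (w - (u + lc)) τ * thetaD 0 τ / theta w τ)
      * (c * Complex.exp (-(2*(Real.pi:ℂ)*Complex.I*(l:ℂ)) * u))⁻¹ * (u / theta u τ) with hF
    have claimA : ∀ t : ℂ, (t - lc) * sigmaW w t τ = F (t - lc) := by
      intro t
      rw [hF]
      simp only []
      rw [sub_add_cancel]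
      unfold sigmaW
      rw [key t]
      simp only [div_eq_mul_inv, mul_inv]
      ring
    -- limits
    have T1 : Tendsto (fun u : ℂ => theta (w - (u + lc)) τ * thetaD 0 τ / theta w τ)
        (𝓝 (0:ℂ)) (𝓝 (theta (w - lc) τ * thetaD 0 τ / theta w τ)) := by
      have hcont : Continuous fun u : ℂ => theta (w - (u + lc)) τ * thetaD 0 τ / theta w τ := by
        exact ((hdiff.continuous.comp (continuous_const.sub
          (continuous_id.add continuous_const))).mul continuous_const).div_const _
      have := hcont.tendsto 0
      simpa using this
    have T2 : Tendsto (fun u : ℂ => (c * Complex.exp (-(2*(Real.pi:ℂ)*Complex.I*(l:ℂ)) * u))⁻¹)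
        (𝓝 (0:ℂ)) (𝓝 c⁻¹) := by
      have hcont : Continuous fun u : ℂ =>
          c * Complex.exp (-(2*(Real.pi:ℂ)*Complex.I*(l:ℂ)) * u) :=
        continuous_const.mul (Complex.continuous_exp.comp (continuous_const.mul continuous_id))
      have h0 : Tendsto (fun u : ℂ => c * Complex.exp (-(2*(Real.pi:ℂ)*Complex.I*(l:ℂ)) * u))
          (𝓝 (0:ℂ)) (𝓝 c) := by
        have := hcont.tendsto 0
        simpa using this
      exact h0.inv₀ hc0
    have hFt : Tendsto F (𝓝[≠] (0:ℂ))
        (𝓝 ((theta (w - lc) τ * thetaD 0 τ / theta w τ) * c⁻¹ * (thetaD 0 τ)⁻¹)) := by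
      exact ((T1.mono_left nhdsWithin_le_nhds).mul
        (T2.mono_left nhdsWithin_le_nhds)).mul (tendsto_slope_theta hτ)
    -- value computation
    have hwkey := key w
    have hinv : theta (w - lc) τ
        = c⁻¹ * Complex.exp ((2*(Real.pi:ℂ)*Complex.I*(l:ℂ)) * (w - lc)) * theta w τ := by
      rw [hwkey, show c⁻¹ * Complex.exp ((2*(Real.pi:ℂ)*Complex.I*(l:ℂ)) * (w - lc)) *
          (c * Complex.exp (-(2*(Real.pi:ℂ)*Complex.I*(l:ℂ)) * (w - lc)) * theta (w - lc) τ)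
          = (c⁻¹ * c) * (Complex.exp ((2*(Real.pi:ℂ)*Complex.I*(l:ℂ)) * (w - lc)) *
            Complex.exp (-(2*(Real.pi:ℂ)*Complex.I*(l:ℂ)) * (w - lc))) * theta (w - lc) τ by ring,
        inv_mul_cancel₀ hc0, ← Complex.exp_add,
        show (2*(Real.pi:ℂ)*Complex.I*(l:ℂ)) * (w - lc)
          + -(2*(Real.pi:ℂ)*Complex.I*(l:ℂ)) * (w - lc) = 0 by ring,
        Complex.exp_zero, one_mul, one_mul]
    have hV : (theta (w - lc) τ * thetaD 0 τ / theta w τ) * c⁻¹ * (thetaD 0 τ)⁻¹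
        = Complex.exp ((2*(Real.pi:ℂ)*Complex.I*(l:ℂ)) * (w - lc)) * (c * c)⁻¹ := by
      rw [hinv]
      field_simp
    have hs2 : s * s = 1 := by
      rw [hs, ← zpow_add₀ (by norm_num : (-1:ℂ) ≠ 0),
        show (l+m)+(l+m) = 2*(l+m) by ring, zpow_mul]
      norm_num
    have hcc : c * c = Complex.exp (-(2*(Real.pi:ℂ)*Complex.I) * (l:ℂ)^2 * τ) := by
      rw [show c * c = (s * s) * (e * e) by rw [hc]; ring, hs2, one_mul, he,
        ← Complex.exp_add]
      congr 1; ring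
    have hfin : Complex.exp (2 * (Real.pi : ℂ) * Complex.I * w * l) * (c * c)
        = Complex.exp ((2*(Real.pi:ℂ)*Complex.I*(l:ℂ)) * (w - lc)) := by
      rw [hcc, ← Complex.exp_add, hlc]
      rw [show 2 * (Real.pi : ℂ) * Complex.I * w * (l:ℂ)
            + -(2*(Real.pi:ℂ)*Complex.I) * (l:ℂ)^2 * τ
          = (2*(Real.pi:ℂ)*Complex.I*(l:ℂ)) * (w - ((l:ℂ)*τ + (m:ℂ)))
            + ((l*m : ℤ):ℂ) * (2*(Real.pi:ℂ)*Complex.I) by push_cast; ring,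
        Complex.exp_add, Complex.exp_int_mul_two_pi_mul_I, mul_one]
    have hVal : (theta (w - lc) τ * thetaD 0 τ / theta w τ) * c⁻¹ * (thetaD 0 τ)⁻¹
        = Complex.exp (2 * (Real.pi : ℂ) * Complex.I * w * l) := by
      rw [hV, ← hfin, mul_assoc, mul_inv_cancel₀ (mul_ne_zero hc0 hc0), mul_one]
    -- translation of filters
    have htr : Tendsto (fun t : ℂ => t - lc) (𝓝[≠] lc) (𝓝[≠] (0:ℂ)) := by
      refine tendsto_nhdsWithin_of_tendsto_nhds_of_eventually_within _ ?_ ?_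
      · have h1 : Tendsto (fun t : ℂ => t - lc) (𝓝 lc) (𝓝 0) := by
          have := (continuous_id.sub (continuous_const (y := lc))).tendsto lc
          simpa [Pi.sub_def] using this
        exact h1.mono_left nhdsWithin_le_nhds
      · filter_upwards [self_mem_nhdsWithin] with t ht
        simp only [Set.mem_compl_iff, Set.mem_singleton_iff]
        exact sub_ne_zero.2 ht
    have hcomp := hFt.comp htr
    rw [hVal] at hcomp
    exact hcomp.congr fun t => (claimA t).symm
  refine ⟨part1, part2, ?_⟩
  have h00 := part2 0 0
  simp only [Int.cast_zero, zero_mul, add_zero, mul_zero, Complex.exp_zero, sub_zero] at h00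
  exact h00
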